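/- In an infinite-dimensional complete metric linear space V, every compact subset is shy. In fact, for every compact S ⊆ V there exists a vector v ∈ V spanning a line L such that every translate of L intersects S in at most one point. -/

import Mathlib

open MeasureTheory Set

open Filter Topology Pointwise

variable {V : Type*} [AddCommGroup V] [Module ℝ V] [MetricSpace V] [CompleteSpace V]
  [IsTopologicalAddGroup V] [ContinuousSMul ℝ V] [MeasurableSpace V] [BorelSpace V]

/-- A set `S` is shy if it is contained in a Borel set admitting a transverse measure. -/
def Shy (S : Set V) : Prop :=
  ∃ T : Set V, S ⊆ T ∧ MeasurableSet T ∧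
    ∃ μ : Measure V, (∃ U : Set V, IsCompact U ∧ 0 < μ U ∧ μ U < ⊤) ∧
      ∀ v : V, μ ((fun x => x + v) '' T) = 0

/-- Riesz-type theorem: in an infinite-dimensional metric linear space,
compact sets have empty interior. -/
theorem aux_interior_empty (hdim : ¬ FiniteDimensional ℝ V) {K : Set V}
    (hK : IsCompact K) : interior K = ∅ := by
  by_contra h
  obtain ⟨y, hy⟩ := nonempty_iff_ne_empty.2 h
  apply hdim
  -- translate so that 0 is interior
  set e : V ≃ₜ V := Homeomorph.subRight y with he
  set K' : Set V := e '' K with hK'def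
  have hK'c : IsCompact K' := hK.image e.continuous
  have h0 : (0 : V) ∈ interior K' := by
    rw [hK'def, ← e.image_interior]
    exact ⟨y, hy, by simp [he]⟩
  set U0 : Set V := interior K' with hU0
  have hU0open : IsOpen U0 := isOpen_interior
  have hU0K : U0 ⊆ K' := interior_subset
  set W : Set V := ((2:ℝ)⁻¹) • U0 with hW
  have hWopen : IsOpen W := hU0open.smul₀ (by norm_num)
  have h0W : (0 : V) ∈ W := ⟨0, h0, by simp⟩
  -- cover K' by finitely many translates of W
  obtain ⟨t, htK, hcover⟩ := hK'c.elim_nhds_subcover (fun x => (fun z => x + z) '' W)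
    (fun x _ => by
      refine ((isOpenMap_add_left x) W hWopen).mem_nhds ⟨0, h0W, by simp⟩)
  set F : Submodule ℝ V := Submodule.span ℝ (t : Set V) with hF
  haveI : FiniteDimensional ℝ F := FiniteDimensional.span_of_finite ℝ t.finite_toSet
  -- key iteration
  have key : ∀ n : ℕ, ∀ z ∈ K', ∃ f ∈ F, ∃ k ∈ K', z = f + ((2:ℝ)⁻¹)^n • k := by
    intro n
    induction n with
    | zero => intro z hz; exact ⟨0, F.zero_mem, z, hz, by simp⟩
    | succ n ih =>
      intro z hz
      obtain ⟨f, hf, k, hk, hzk⟩ := ih z hz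
      have := hcover hk
      simp only [mem_iUnion] at this
      obtain ⟨x, hxt, u, huW, hku⟩ := this
      obtain ⟨u0, hu0, rfl⟩ := huW
      refine ⟨f + ((2:ℝ)⁻¹)^n • x, F.add_mem hf (F.smul_mem _
        (Submodule.subset_span hxt)), u0, hU0K hu0, ?_⟩
      rw [hzk, ← hku]
      rw [smul_add, smul_smul, ← pow_succ]
      ring_nf
      module
  -- every point of K' is a limit of points of F, and F is closed
  have hFclosed : IsClosed (F : Set V) := Submodule.closed_of_finiteDimensional F
  have hKF : K' ⊆ (F : Set V) := by
    intro z hz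
    choose f hfF k hkK hzk using fun n => key n z hz
    obtain ⟨a, _, φ, hφ, hconv⟩ := hK'c.tendsto_subseq hkK
    have hpow : Tendsto (fun n => ((2:ℝ)⁻¹)^(φ n)) atTop (𝓝 0) :=
      (tendsto_pow_atTop_nhds_zero_of_lt_one (by norm_num) (by norm_num)).comp
        hφ.tendsto_atTop
    have hsm : Tendsto (fun n => ((2:ℝ)⁻¹)^(φ n) • k (φ n)) atTop (𝓝 0) := by
      have := hpow.smul hconv
      simpa using this
    have hfz : Tendsto (fun n => f (φ n)) atTop (𝓝 z) := by
      have : (fun n => f (φ n)) = fun n => z - ((2:ℝ)⁻¹)^(φ n) • k (φ n) := by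
        funext n; rw [hzk (φ n)]; abel
      rw [this]
      simpa using tendsto_const_nhds.sub hsm
    exact hFclosed.mem_of_tendsto hfz (Filter.Eventually.of_forall fun n => hfF (φ n))
  -- F is absorbing since it contains a neighborhood of 0, hence F = ⊤
  have hFtop : F = ⊤ := by
    rw [Submodule.eq_top_iff']
    intro v
    have hcont : Tendsto (fun s : ℝ => s • v) (𝓝 0) (𝓝 0) := by
      have := (by fun_prop : Continuous fun s : ℝ => s • v).tendsto (0:ℝ)
      simpa using this
    have hmem : {s : ℝ | s • v ∈ U0} ∈ 𝓝 (0:ℝ) := hcont (hU0open.mem_nhds h0)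
    have h1 : {s : ℝ | s • v ∈ U0} ∩ {(0:ℝ)}ᶜ ∈ 𝓝[≠] (0:ℝ) :=
      inter_mem (nhdsWithin_le_nhds hmem) self_mem_nhdsWithin
    obtain ⟨s, hsU, hs0⟩ := Filter.nonempty_of_mem h1
    have hs0' : s ≠ 0 := hs0
    have hsv : s • v ∈ (F : Set V) := hKF (hU0K hsU)
    have := F.smul_mem s⁻¹ hsv
    rwa [smul_smul, inv_mul_cancel₀ hs0', one_smul] at this
  have : FiniteDimensional ℝ (⊤ : Submodule ℝ V) := hFtop ▸ inferInstance
  exact (Submodule.topEquiv (R := ℝ) (M := V)).finiteDimensional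

/-- In an infinite-dimensional complete metric linear space every compact set `S` is
shy; in fact there is a nonzero vector `v` (spanning a line `L`) such that every
translate of `L` meets `S` in at most one point. -/
theorem stmt_8 (hdim : ¬ FiniteDimensional ℝ V) (S : Set V) (hS : IsCompact S) :
    Shy S ∧ ∃ v : V, v ≠ 0 ∧ ∀ w : V, {t : ℝ | w + t • v ∈ S}.Subsingleton := by
  -- the countable family of compact "difference cones"
  set C : ℕ → Set V := fun n =>
    {0} ∪ (fun p : ℝ × V × V => p.1 • (p.2.1 - p.2.2)) '' (Icc (-(n:ℝ)) n ×ˢ S ×ˢ S) with hC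
  have hCc : ∀ n, IsCompact (C n) := by
    intro n
    refine isCompact_singleton.union ?_
    exact ((isCompact_Icc.prod (hS.prod hS)).image (by fun_prop))
  have hCint : ∀ n, interior (C n) = ∅ := fun n => aux_interior_empty hdim (hCc n)
  have hdense : Dense (⋂ n, (C n)ᶜ) := by
    refine dense_iInter_of_isOpen (fun n => (hCc n).isClosed.isOpen_compl) (fun n => ?_)
    rw [← interior_eq_empty_iff_dense_compl]
    exact hCint n
  obtain ⟨v, hv⟩ := hdense.nonempty
  simp only [mem_iInter, mem_compl_iff] at hv
  have hv0 : v ≠ 0 := fun h => hv 0 (by simp [hC, h])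
  -- the line property
  have hline : ∀ w : V, {t : ℝ | w + t • v ∈ S}.Subsingleton := by
    intro w t ht t' ht'
    by_contra hne
    apply hv ⌈|(t - t')⁻¹|⌉₊
    refine Or.inr ⟨((t - t')⁻¹, w + t • v, w + t' • v), ⟨?_, ht, ht'⟩, ?_⟩
    · exact abs_le.mp (Nat.le_ceil |(t - t')⁻¹|)
    · have htt : t - t' ≠ 0 := sub_ne_zero.mpr hne
      have : (w + t • v) - (w + t' • v) = (t - t') • v := by
        rw [sub_smul]; abel
      simp only [this]
      rw [smul_smul, inv_mul_cancel₀ htt, one_smul]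
  refine ⟨?_, v, hv0, hline⟩
  -- Shy via Lebesgue measure on the line spanned by v
  have hmeas : Measurable (fun t : ℝ => t • v) := by fun_prop
  refine ⟨S, subset_rfl, hS.isClosed.measurableSet,
    Measure.map (fun t : ℝ => t • v) (volume.restrict (Icc (0:ℝ) 1)),
    ⟨(fun t : ℝ => t • v) '' Icc 0 1, isCompact_Icc.image (by fun_prop), ?_, ?_⟩, ?_⟩
  · rw [Measure.map_apply hmeas
      ((isCompact_Icc.image (by fun_prop : Continuous fun t : ℝ => t • v)).isClosed.measurableSet)]
    have hsub : Icc (0:ℝ) 1 ⊆ (fun t : ℝ => t • v) ⁻¹' ((fun t : ℝ => t • v) '' Icc 0 1) :=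
      subset_preimage_image _ _
    refine lt_of_lt_of_le (b := volume.restrict (Icc (0:ℝ) 1) (Icc (0:ℝ) 1))
      ?_ (measure_mono hsub)
    rw [Measure.restrict_apply_self]
    simp [Real.volume_Icc]
  · calc Measure.map (fun t : ℝ => t • v) (volume.restrict (Icc (0:ℝ) 1))
          ((fun t : ℝ => t • v) '' Icc 0 1)
        ≤ Measure.map (fun t : ℝ => t • v) (volume.restrict (Icc (0:ℝ) 1)) univ :=
          measure_mono (subset_univ _)
      _ = volume.restrict (Icc (0:ℝ) 1) univ := by
          rw [Measure.map_apply hmeas MeasurableSet.univ, preimage_univ]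
      _ < ⊤ := by simp [Real.volume_Icc]
  · intro w
    rw [Measure.map_apply hmeas ((hS.image (by fun_prop)).isClosed.measurableSet)]
    refine measure_mono_null ?_ ((hline (-w)).measure_zero _)
    intro t ht
    simp only [mem_preimage, mem_image] at ht
    obtain ⟨x, hx, hxe⟩ := ht
    simp only [mem_setOf_eq]
    have : -w + t • v = x := by rw [← hxe]; abel
    rwa [this]
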